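/- Let δ > 0 and γ ∈ (0, min(1, δ)]. Then for every z ∈ [0,1]: z + δ·z·(1 − z) ≥ (1 − e^{−γz}) / (1 − e^{−γ}). -/

import Mathlib

open Real Set

private lemma exp_neg_le_half (γ : ℝ) (h0 : 0 < γ) (h1 : γ ≤ 1) :
    Real.exp (-γ) ≤ 1 - γ / 2 := by
  have hpos : (0:ℝ) < 1 + γ := by linarith
  have h2 : (1:ℝ) + γ ≤ Real.exp γ := by
    have := Real.add_one_le_exp γ; linarith
  have h3 : Real.exp (-γ) ≤ 1 / (1 + γ) := by
    rw [Real.exp_neg, inv_eq_one_div]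
    exact one_div_le_one_div_of_le hpos h2
  have h4 : 1 / (1 + γ) ≤ 1 - γ / 2 := by
    rw [div_le_iff₀ hpos]; nlinarith
  linarith

private lemma hasDerivAt_exp_neg (γ x : ℝ) :
    HasDerivAt (fun z : ℝ => Real.exp (-γ * z)) (-γ * Real.exp (-γ * x)) x := by
  have h : HasDerivAt (fun z : ℝ => -γ * z) (-γ) x := by
    simpa using (hasDerivAt_id x).const_mul (-γ)
  simpa [mul_comm] using h.exp

private lemma key_concave (γ : ℝ) (h0 : 0 < γ) (h1 : γ ≤ 1) :
    ConcaveOn ℝ (Set.Icc (0:ℝ) 1) (fun z =>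
      Real.exp (-γ * z) - (1 - z) - z * Real.exp (-γ)
        + γ * (z * (1 - z)) * (1 - Real.exp (-γ))) := by
  set u := Real.exp (-γ) with hu
  refine concaveOn_of_hasDerivWithinAt2_nonpos (f' := fun z =>
      -γ * Real.exp (-γ * z) + 1 - u + γ * (1 - 2 * z) * (1 - u))
    (f'' := fun z => γ ^ 2 * Real.exp (-γ * z) - 2 * γ * (1 - u))
    (convex_Icc 0 1) (by fun_prop) ?_ ?_ ?_
  · intro x hx
    have d1 := hasDerivAt_exp_neg γ x
    have d2 : HasDerivAt (fun z : ℝ => 1 - z) (-1) x := by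
      simpa using (hasDerivAt_id x).const_sub 1
    have d3 : HasDerivAt (fun z : ℝ => z * u) u x := by
      simpa using (hasDerivAt_id x).mul_const u
    have d4 : HasDerivAt (fun z : ℝ => γ * (z * (1 - z)) * (1 - u))
        (γ * (1 - 2 * x) * (1 - u)) x := by
      have h5 : HasDerivAt (fun z : ℝ => z * (1 - z)) (1 - 2 * x) x := by
        have := (hasDerivAt_id x).mul ((hasDerivAt_id x).const_sub 1)
        simp only [id_eq] at this
        exact this.congr_deriv (by ring)
      have := (h5.const_mul γ).mul_const (1 - u)
      convert this using 1 <;> ring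
    have := ((d1.sub d2).sub d3).add d4
    refine HasDerivAt.hasDerivWithinAt ?_
    exact this.congr_deriv (by ring)
  · intro x hx
    have d1 := (hasDerivAt_exp_neg γ x).const_mul (-γ)
    have d2 : HasDerivAt (fun z : ℝ => γ * (1 - 2 * z) * (1 - u))
        (-2 * γ * (1 - u)) x := by
      have h5 : HasDerivAt (fun z : ℝ => (1:ℝ) - 2 * z) (-2) x := by
        simpa using ((hasDerivAt_id x).const_mul 2).const_sub 1
      have := (h5.const_mul γ).mul_const (1 - u)
      exact this.congr_deriv (by ring)
    have := ((d1.add_const 1).sub_const u).add d2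
    refine HasDerivAt.hasDerivWithinAt ?_
    exact this.congr_deriv (by ring)
  · intro x hx
    show γ ^ 2 * Real.exp (-γ * x) - 2 * γ * (1 - u) ≤ 0
    rw [interior_Icc] at hx
    have hx0 : 0 ≤ x := le_of_lt hx.1
    have hexp : Real.exp (-γ * x) ≤ 1 := by
      rw [← Real.exp_zero]
      apply Real.exp_le_exp.2
      nlinarith
    have hu2 : u ≤ 1 - γ / 2 := exp_neg_le_half γ h0 h1
    have A : γ ^ 2 * Real.exp (-γ * x) ≤ γ ^ 2 * 1 :=
      mul_le_mul_of_nonneg_left hexp (by positivity)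
    have B : γ * u ≤ γ * (1 - γ / 2) := mul_le_mul_of_nonneg_left hu2 h0.le
    nlinarith [sq_nonneg γ]

/-- For `δ > 0` and `γ ∈ (0, min(1,δ)]`, every `z ∈ [0,1]` satisfies
`z + δ·z·(1−z) ≥ (1 − e^{−γz})/(1 − e^{−γ})`. -/
theorem stmt2 (δ γ : ℝ) (hδ : 0 < δ) (hγ : γ ∈ Set.Ioc 0 (min 1 δ)) :
    ∀ z ∈ Set.Icc (0 : ℝ) 1,
      (1 - Real.exp (-γ * z)) / (1 - Real.exp (-γ)) ≤ z + δ * z * (1 - z) := by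
  obtain ⟨h0, hle⟩ := hγ
  have h1 : γ ≤ 1 := hle.trans (min_le_left _ _)
  have hγδ : γ ≤ δ := hle.trans (min_le_right _ _)
  intro z hz
  obtain ⟨hz0, hz1⟩ := hz
  set u := Real.exp (-γ) with hu
  have hu1 : u < 1 := by
    rw [hu, ← Real.exp_zero]
    exact Real.exp_lt_exp.2 (by linarith)
  have hden : 0 < 1 - u := by linarith
  -- value of the concave function at z is nonneg
  have hcc := key_concave γ h0 h1
  have h00 : (0:ℝ) ∈ Set.Icc (0:ℝ) 1 := by norm_num
  have h11 : (1:ℝ) ∈ Set.Icc (0:ℝ) 1 := by norm_num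
  have := hcc.2 h00 h11 (show (0:ℝ) ≤ 1 - z by linarith) hz0 (by ring)
  simp only [smul_eq_mul] at this
  have hf0 : Real.exp (-γ * 0) - (1 - 0) - 0 * u + γ * (0 * (1 - 0)) * (1 - u) = 0 := by
    norm_num
  have hf1 : Real.exp (-γ * 1) - (1 - 1) - 1 * u + γ * (1 * (1 - 1)) * (1 - u) = 0 := by
    simp [hu]
  have hz' : (1 - z) * 0 + z * 1 = z := by ring
  rw [hz'] at this
  have hnn : 0 ≤ Real.exp (-γ * z) - (1 - z) - z * u + γ * (z * (1 - z)) * (1 - u) := by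
    calc (0:ℝ) = (1 - z) * (Real.exp (-γ * 0) - (1 - 0) - 0 * u + γ * (0 * (1 - 0)) * (1 - u))
        + z * (Real.exp (-γ * 1) - (1 - 1) - 1 * u + γ * (1 * (1 - 1)) * (1 - u)) := by
          rw [hf0, hf1]; ring
      _ ≤ _ := this
  have key : 1 - Real.exp (-γ * z) ≤ (z + γ * z * (1 - z)) * (1 - u) := by nlinarith
  have step : (1 - Real.exp (-γ * z)) / (1 - u) ≤ z + γ * z * (1 - z) := by
    rw [div_le_iff₀ hden]; exact key
  have mono : z + γ * z * (1 - z) ≤ z + δ * z * (1 - z) := by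
    nlinarith [mul_nonneg (mul_nonneg (sub_nonneg.2 hγδ) hz0) (sub_nonneg.2 hz1)]
  linarith
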